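/- Three-term contiguous relation (A&A comparison, fifth form): Let a,b,c,d,e ∈ ℂ with a,c,e ≠ 0, |bd/(qace)| < 1, and all denominators appearing below nonzero. Set Y_q = (a−b)(q−d) / ((1−b)(qa−d)) and Z_q = (1−a)(qb−d) / ((1−b)(qa−d)). Then ₃φ₂(a,c,e; b,d; q, bd/(ace)) = Y_q·₃φ₂(a, c, e; qb, d/q; q, bd/(ace)) + Z_q·₃φ₂(qa, c, e; qb, d; q, bd/(ace)). -/

import Mathlib

open Filter

noncomputable def qPoch (q x : ℂ) (k : ℕ) : ℂ :=
  ∏ i ∈ Finset.range k, (1 - x * q ^ i)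

/-- The basic hypergeometric series ₃φ₂(a,c,e; b,d; q, z). -/
noncomputable def phi32 (q z a c e b d : ℂ) : ℂ :=
  ∑' k : ℕ, (qPoch q a k * qPoch q c k * qPoch q e k) /
      (qPoch q b k * qPoch q d k * qPoch q q k) * z ^ k

lemma qPoch_succ (q x : ℂ) (k : ℕ) :
    qPoch q x (k+1) = qPoch q x k * (1 - x * q ^ k) := by
  simp [qPoch, Finset.prod_range_succ]

lemma qPoch_shift (q x : ℂ) (k : ℕ) :
    qPoch q x (k+1) = (1 - x) * qPoch q (q * x) k := by
  rw [qPoch, Finset.prod_range_succ']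
  simp only [pow_zero, mul_one, qPoch]
  rw [mul_comm]
  congr 1
  apply Finset.prod_congr rfl
  intro i _
  ring


lemma qPoch_q_ne_zero (q : ℂ) (hq1 : ‖q‖ < 1) (k : ℕ) : qPoch q q k ≠ 0 := by
  rw [qPoch]
  apply Finset.prod_ne_zero_iff.mpr
  intro i _ h
  have h1 : q * q ^ i = 1 := by linear_combination -h
  have hn : ‖q * q ^ i‖ < 1 := by
    rw [norm_mul, norm_pow]
    have h2 : ‖q‖ ^ i ≤ 1 := pow_le_one₀ (norm_nonneg q) hq1.le
    nlinarith [norm_nonneg q, pow_nonneg (norm_nonneg q) i]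
  rw [h1] at hn
  simp at hn


lemma summable_term (q z a c e b d : ℂ) (hq1 : ‖q‖ < 1) (hz : ‖z‖ < 1)
    (hb : ∀ k, qPoch q b k ≠ 0) (hd : ∀ k, qPoch q d k ≠ 0) :
    Summable (fun k => qPoch q a k * qPoch q c k * qPoch q e k /
      (qPoch q b k * qPoch q d k * qPoch q q k) * z ^ k) := by
  have hQ := qPoch_q_ne_zero q hq1
  set F := fun k => qPoch q a k * qPoch q c k * qPoch q e k /
      (qPoch q b k * qPoch q d k * qPoch q q k) * z ^ k with hF
  set r := fun k : ℕ => (1 - a * q ^ k) * (1 - c * q ^ k) * (1 - e * q ^ k) /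
      ((1 - b * q ^ k) * (1 - d * q ^ k) * (1 - q * q ^ k)) * z with hr
  have hrec : ∀ k, F (k+1) = F k * r k := by
    intro k
    have hb1 : (1 - b * q ^ k) ≠ 0 := by
      have := hb (k+1); rw [qPoch_succ] at this; exact right_ne_zero_of_mul this
    have hd1 : (1 - d * q ^ k) ≠ 0 := by
      have := hd (k+1); rw [qPoch_succ] at this; exact right_ne_zero_of_mul this
    have hQ1 : (1 - q * q ^ k) ≠ 0 := by
      have := hQ (k+1); rw [qPoch_succ] at this; exact right_ne_zero_of_mul this
    simp only [hF, hr, qPoch_succ, pow_succ]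
    simp only [div_eq_mul_inv, mul_inv]
    ring
  have ht : Tendsto (fun k : ℕ => q ^ k) atTop (nhds 0) :=
    tendsto_pow_atTop_nhds_zero_of_norm_lt_one hq1
  have tfac : ∀ x : ℂ, Tendsto (fun k : ℕ => 1 - x * q ^ k) atTop (nhds 1) := by
    intro x
    have := (tendsto_const_nhds (x := (1:ℂ)) (f := atTop)).sub (ht.const_mul x)
    simpa using this
  have tnum : Tendsto (fun k : ℕ => (1 - a * q ^ k) * (1 - c * q ^ k) * (1 - e * q ^ k))
      atTop (nhds 1) := by
    have := ((tfac a).mul (tfac c)).mul (tfac e)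
    simpa using this
  have tden : Tendsto (fun k : ℕ => (1 - b * q ^ k) * (1 - d * q ^ k) * (1 - q * q ^ k))
      atTop (nhds 1) := by
    have := ((tfac b).mul (tfac d)).mul (tfac q)
    simpa using this
  have tr : Tendsto r atTop (nhds z) := by
    have := (tnum.div tden one_ne_zero).mul_const z
    simpa [hr] using this
  have trn : Tendsto (fun k => ‖r k‖) atTop (nhds ‖z‖) := tr.norm
  have hev : ∀ᶠ k in atTop, ‖r k‖ < (‖z‖ + 1) / 2 :=
    trn.eventually_lt_const (by linarith)
  apply summable_of_ratio_norm_eventually_le (r := (‖z‖ + 1) / 2) (by linarith)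
  filter_upwards [hev] with k hk
  rw [hrec k, norm_mul, mul_comm]
  exact mul_le_mul_of_nonneg_right hk.le (norm_nonneg _)

set_option maxHeartbeats 4000000 in
lemma term_eq (q a b c d e Y Z z : ℂ) (hq : q ≠ 0)
    (hY : Y = (a - b) * (q - d) / ((1 - b) * (q * a - d)))
    (hZ : Z = (1 - a) * (q * b - d) / ((1 - b) * (q * a - d)))
    (h1 : 1 - b ≠ 0) (h2 : q * a - d ≠ 0)
    (hp0 : ∀ k, qPoch q (b) k ≠ 0) (hp1 : ∀ k, qPoch q (d) k ≠ 0)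
    (hp2 : ∀ k, qPoch q (q * b) k ≠ 0) (hp3 : ∀ k, qPoch q (d / q) k ≠ 0)
    (hQ : ∀ k, qPoch q q k ≠ 0) (k : ℕ) :
    qPoch q a k * qPoch q c k * qPoch q e k /
        (qPoch q b k * qPoch q d k * qPoch q q k) * z ^ k =
    Y * (qPoch q a k * qPoch q c k * qPoch q e k /
        (qPoch q (q * b) k * qPoch q (d / q) k * qPoch q q k) * z ^ k) +
    Z * (qPoch q (q * a) k * qPoch q c k * qPoch q e k /
        (qPoch q (q * b) k * qPoch q d k * qPoch q q k) * z ^ k) := by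
  have hbk : 1 - b * q ^ k ≠ 0 := by
    have := hp0 (k+1); rw [qPoch_succ] at this; exact right_ne_zero_of_mul this
  have hdqk : 1 - d / q * q ^ k ≠ 0 := by
    have := hp3 (k+1); rw [qPoch_succ] at this; exact right_ne_zero_of_mul this
  have hdq1 : 1 - d / q ≠ 0 := by
    have := hp3 1; simpa [qPoch] using this
  have relB : qPoch q b k * (1 - b * q ^ k) = (1 - b) * qPoch q (q * b) k := by
    rw [← qPoch_succ, qPoch_shift]
  have hqd : q * (d / q) = d := by field_simp
  have relD : qPoch q (d / q) k * (1 - d / q * q ^ k) = (1 - d / q) * qPoch q d k := by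
    rw [← qPoch_succ, qPoch_shift, hqd]
  have relA : (1 - a) * qPoch q (q * a) k = qPoch q a k * (1 - a * q ^ k) := by
    rw [← qPoch_shift, qPoch_succ]
  by_cases ha1 : a = 1
  · subst ha1
    have hZ0 : Z = 0 := by rw [hZ]; simp
    have hY1 : Y = 1 := by
      rw [hY]
      rw [show (1:ℂ) - b = 1 - b from rfl]
      have : q * 1 - d = q - d := by ring
      rw [this] at h2 ⊢
      exact div_self (mul_ne_zero h1 h2)
    rw [hZ0, hY1]
    cases k with
    | zero => simp [qPoch]
    | succ n =>
      have hA : qPoch q 1 (n+1) = 0 := by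
        rw [qPoch]
        apply Finset.prod_eq_zero (Finset.mem_range.mpr (Nat.succ_pos n))
        simp
      rw [hA]
      simp
  · have ha1' : (1:ℂ) - a ≠ 0 := sub_ne_zero_of_ne (fun h => ha1 h.symm)
    set w := d / q with hw0
    have hw : q * w = d := by rw [hw0]; field_simp
    set p := (q : ℂ) ^ k with hp
    set A := qPoch q a k
    set A' := qPoch q (q * a) k
    set C := qPoch q c k
    set E := qPoch q e k
    set B := qPoch q b k
    set B' := qPoch q (q * b) k
    set D := qPoch q d k
    set D' := qPoch q w k
    set Q' := qPoch q q k
    have hB : B ≠ 0 := hp0 k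
    have hB' : B' ≠ 0 := hp2 k
    have hD : D ≠ 0 := hp1 k
    have hD' : D' ≠ 0 := hp3 k
    have hQ' : Q' ≠ 0 := hQ k
    have hw1 : 1 - w ≠ 0 := hdq1
    have hwp : 1 - w * p ≠ 0 := hdqk
    have hY' : Y = (a - b) * (q - q * w) / ((1 - b) * (q * a - q * w)) := by
      rw [hY, hw]
    have hZ' : Z = (1 - a) * (q * b - q * w) / ((1 - b) * (q * a - q * w)) := by
      rw [hZ, hw]
    have h2' : q * a - q * w ≠ 0 := by rw [hw]; exact h2
    set u := (1 - b) * (1 - w * p) / ((1 - b * p) * (1 - w)) with hu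
    set v := (1 - a * p) * (1 - b) / ((1 - a) * (1 - b * p)) with hv
    set t := A * C * E / (B * D * Q') * z ^ k with ht
    have scalar : (1 : ℂ) = Y * u + Z * v := by
      rw [hY', hZ', hu, hv]
      have haw : a - w ≠ 0 := fun h => h2' (by linear_combination q * h)
      field_simp
      ring
    have hg : t * u = A * C * E / (B' * D' * Q') * z ^ k := by
      have e1 : t * u = A * C * E * z ^ k * ((1 - b) * (1 - w * p)) /
          (B * D * Q' * ((1 - b * p) * (1 - w))) := by
        rw [ht, hu]; field_simp
      have e2 : A * C * E / (B' * D' * Q') * z ^ k = A * C * E * z ^ k / (B' * D' * Q') :=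
        div_mul_eq_mul_div _ _ _
      rw [e1, e2, div_eq_div_iff
        (mul_ne_zero (mul_ne_zero (mul_ne_zero hB hD) hQ') (mul_ne_zero hbk hw1))
        (mul_ne_zero (mul_ne_zero hB' hD') hQ')]
      linear_combination (-(A * C * E * z ^ k * Q' * (1 - w * p) * D')) * relB +
        (A * C * E * z ^ k * Q' * B * (1 - b * p)) * relD
    have hh : t * v = A' * C * E / (B' * D * Q') * z ^ k := by
      have e1 : t * v = A * C * E * z ^ k * ((1 - a * p) * (1 - b)) /
          (B * D * Q' * ((1 - a) * (1 - b * p))) := by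
        rw [ht, hv]; field_simp
      have e2 : A' * C * E / (B' * D * Q') * z ^ k = A' * C * E * z ^ k / (B' * D * Q') :=
        div_mul_eq_mul_div _ _ _
      rw [e1, e2, div_eq_div_iff
        (mul_ne_zero (mul_ne_zero (mul_ne_zero hB hD) hQ') (mul_ne_zero ha1' hbk))
        (mul_ne_zero (mul_ne_zero hB' hD) hQ')]
      linear_combination (-(C * E * z ^ k * D * Q' * A * (1 - a * p))) * relB -
        (C * E * z ^ k * D * Q' * B * (1 - b * p)) * relA
    calc A * C * E / (B * D * Q') * z ^ k = t * 1 := (mul_one t).symm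
      _ = t * (Y * u + Z * v) := by rw [← scalar]
      _ = Y * (t * u) + Z * (t * v) := by ring
      _ = _ := by rw [hg, hh]


theorem threeTerm_AA5 (q a b c d e Y Z : ℂ)
    (hq0 : 0 < ‖q‖) (hq1 : ‖q‖ < 1)
    (ha : a ≠ 0) (hc : c ≠ 0) (he : e ≠ 0)
    (hconv : ‖b * d / (q * a * c * e)‖ < 1)
    (hY : Y = (a - b) * (q - d) / ((1 - b) * (q * a - d)))
    (hZ : Z = (1 - a) * (q * b - d) / ((1 - b) * (q * a - d)))
    (h1 : 1 - b ≠ 0) (h2 : q * a - d ≠ 0)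
    (hp0 : ∀ k, qPoch q (b) k ≠ 0) (hp1 : ∀ k, qPoch q (d) k ≠ 0) (hp2 : ∀ k, qPoch q (q * b) k ≠ 0) (hp3 : ∀ k, qPoch q (d / q) k ≠ 0) :
    phi32 q (b * d / (a * c * e)) a c e b d =
      Y * phi32 q (b * d / (a * c * e)) a c e (q * b) (d / q) +
      Z * phi32 q (b * d / (a * c * e)) (q * a) c e (q * b) d := by
  have hq : q ≠ 0 := by
    intro h
    rw [h] at hq0
    simp at hq0
  have hq1' : ‖q‖ < 1 := by exact hq1
  have hQ := qPoch_q_ne_zero q hq1'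
  set z := b * d / (a * c * e) with hzdef
  have hz : ‖z‖ < 1 := by
    have hzq : z = q * (b * d / (q * a * c * e)) := by
      rw [hzdef]; field_simp
    rw [hzq, norm_mul]
    have h1' : ‖b * d / (q * a * c * e)‖ < 1 := by
      exact hconv
    nlinarith [norm_nonneg q, norm_nonneg (b * d / (q * a * c * e))]
  have hgsum := summable_term q z a c e (q * b) (d / q) hq1' hz hp2 hp3
  have hhsum := summable_term q z (q * a) c e (q * b) d hq1' hz hp2 hp1
  unfold phi32
  rw [tsum_congr (term_eq q a b c d e Y Z z hq hY hZ h1 h2 hp0 hp1 hp2 hp3 hQ)]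
  rw [Summable.tsum_add (hgsum.mul_left Y) (hhsum.mul_left Z), tsum_mul_left, tsum_mul_left]
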